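/- arXiv:2204.10103 — 4 statements merged into one kernel-verified Lean document; each statement's English description precedes it below -/
import Mathlib

section
/- Let H ∈ (0,1/2], p > 1 and C > 0. For ε ∈ (0,1) set k^ε(t,s) = ∫_0^{min(s,t)} K^ε(t,u) K^ε(s,u) du, where K^ε(r,u) = C ε^H (r−u)^{H−1/2}(−log(ε(r−u)))^{−p} for u < r and 0 otherwise, and set k(t,s) = C² ∫_0^{min(s,t)} (t−u)^{H−1/2}(s−u)^{H−1/2} du. Then the normalized covariances k^ε(t,s)/(ε^{2H}(−log ε)^{−2p}) converge to k(t,s) uniformly on (t,s) ∈ [0,1]² as ε → 0⁺. -/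
open Real Filter Set MeasureTheory

/-- The short-time rescaled log-modulated kernel, extended by `0` for `u ≥ r`. -/
noncomputable def Keps (H p C ε r u : ℝ) : ℝ :=
  if u < r then C * ε ^ H * (r - u) ^ (H - 1 / 2) * (-Real.log (ε * (r - u))) ^ (-p) else 0

lemma meas_rpowc (c : ℝ) : Measurable (fun x : ℝ => x ^ c) := by measurability

lemma powInt {q : ℝ} (m c : ℝ) (hq : -1 < q) :
    IntervalIntegrable (fun u => (m - u) ^ q) volume c m := by
  simpa using (intervalIntegral.intervalIntegrable_rpow' (a := m - c) (b := 0) hq).comp_sub_left m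

lemma powVal {q : ℝ} (m c d : ℝ) (hq : -1 < q) :
    ∫ u in c..d, (m - u) ^ q = ((m - c) ^ (q+1) - (m - d) ^ (q+1)) / (q+1) := by
  rw [intervalIntegral.integral_comp_sub_left (fun x => x ^ q) m, integral_rpow (Or.inl hq)]

set_option maxHeartbeats 2000000 in
lemma key_est (H p C : ℝ) (hH0 : 0 < H) (hH : H ≤ 1 / 2) (hp : 1 < p) (hC : 0 < C)
    (δ ε : ℝ) (hδ0 : 0 < δ) (hδ1 : δ ≤ 1) (hε0 : 0 < ε) (hε1 : ε < 1)
    (t s : ℝ) (ht0 : 0 ≤ t) (ht1 : t ≤ 1) (hs0 : 0 ≤ s) (hs1 : s ≤ 1) :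
    dist
      (C ^ 2 * ∫ u in (0:ℝ)..(min s t), (t - u) ^ (H - 1/2) * (s - u) ^ (H - 1/2))
      ((∫ u in (0:ℝ)..(min s t), Keps H p C ε t u * Keps H p C ε s u) /
          (ε ^ (2 * H) * (-Real.log ε) ^ (-(2 * p))))
      ≤ C ^ 2 * ((1 - ((-Real.log (ε*δ)) ^ (-p) / (-Real.log ε) ^ (-p)) ^ 2) * (1/(2*H))
        + δ ^ (2*H) / (2*H)) := by
  set m := min s t with hm
  have hm0 : 0 ≤ m := le_min hs0 ht0
  have hms : m ≤ s := min_le_left _ _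
  have hmt : m ≤ t := min_le_right _ _
  have hm1 : m ≤ 1 := le_trans hmt ht1
  have hq : (-1:ℝ) < 2*H - 1 := by linarith
  have h2H : (0:ℝ) < 2*H := by linarith
  have hL : 0 < -Real.log ε := by have := Real.log_neg hε0 hε1; linarith
  have hLp : 0 < (-Real.log ε) ^ (-p) := Real.rpow_pos_of_pos hL _
  have hLp2 : 0 < (-Real.log ε) ^ (-(2*p)) := Real.rpow_pos_of_pos hL _
  have hLsq : (-Real.log ε) ^ (-p) * (-Real.log ε) ^ (-p) = (-Real.log ε) ^ (-(2*p)) := by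
    rw [← Real.rpow_add hL]; ring_nf
  -- generic log facts
  have hlog : ∀ x : ℝ, 0 < x → x ≤ 1 →
      0 < -Real.log (ε*x) ∧ -Real.log ε ≤ -Real.log (ε*x) := by
    intro x hx hx1
    have h2 : 0 < ε*x := mul_pos hε0 hx
    have h1 : ε*x ≤ ε := by nlinarith
    have h3 : Real.log (ε*x) ≤ Real.log ε := Real.log_le_log h2 h1
    have h4 : Real.log (ε*x) < 0 := Real.log_neg h2 (lt_of_le_of_lt h1 hε1)
    constructor <;> linarith
  set F : ℝ → ℝ := fun u =>
    ((-Real.log (ε*(t-u))) ^ (-p) * (-Real.log (ε*(s-u))) ^ (-p)) / (-Real.log ε) ^ (-(2*p))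
    with hF
  set base : ℝ → ℝ := fun u => (t-u) ^ (H - 1/2) * (s-u) ^ (H - 1/2) with hbase
  set r : ℝ := (-Real.log (ε*δ)) ^ (-p) / (-Real.log ε) ^ (-p) with hrdef
  have hr0 : 0 ≤ r := le_of_lt (div_pos (Real.rpow_pos_of_pos (hlog δ hδ0 hδ1).1 _) hLp)
  have hr1 : r ≤ 1 := by
    rw [hrdef, div_le_one hLp]
    exact Real.rpow_le_rpow_of_nonpos hL (hlog δ hδ0 hδ1).2 (by linarith)
  have hr2 : 0 ≤ 1 - r^2 := by nlinarith
  have hF01 : ∀ u ∈ Ioo (0:ℝ) m, 0 ≤ F u ∧ F u ≤ 1 := by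
    intro u hu
    have htu := hlog (t-u) (by linarith [hu.2, hmt]) (by linarith [hu.1])
    have hsu := hlog (s-u) (by linarith [hu.2, hms]) (by linarith [hu.1])
    constructor
    · exact div_nonneg (mul_nonneg (Real.rpow_nonneg htu.1.le _) (Real.rpow_nonneg hsu.1.le _))
        hLp2.le
    · rw [hF, div_le_one hLp2]
      calc (-Real.log (ε*(t-u))) ^ (-p) * (-Real.log (ε*(s-u))) ^ (-p)
          ≤ (-Real.log ε) ^ (-p) * (-Real.log ε) ^ (-p) := by
            apply mul_le_mul (Real.rpow_le_rpow_of_nonpos hL htu.2 (by linarith))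
              (Real.rpow_le_rpow_of_nonpos hL hsu.2 (by linarith))
              (Real.rpow_nonneg hsu.1.le _) hLp.le
        _ = (-Real.log ε) ^ (-(2*p)) := hLsq
  have hbase_le : ∀ u ∈ Ioo (0:ℝ) m, 0 ≤ base u ∧ base u ≤ (m - u) ^ (2*H-1) := by
    intro u hu
    have hmu : 0 < m - u := by linarith [hu.2]
    have h1 : (t-u) ^ (H-1/2) ≤ (m-u) ^ (H-1/2) :=
      Real.rpow_le_rpow_of_nonpos hmu (by linarith [hmt]) (by linarith)
    have h2 : (s-u) ^ (H-1/2) ≤ (m-u) ^ (H-1/2) :=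
      Real.rpow_le_rpow_of_nonpos hmu (by linarith [hms]) (by linarith)
    have h3 : (0:ℝ) ≤ (t-u) ^ (H-1/2) := Real.rpow_nonneg (by linarith [hu.2, hmt]) _
    have h4 : (0:ℝ) ≤ (s-u) ^ (H-1/2) := Real.rpow_nonneg (by linarith [hu.2, hms]) _
    refine ⟨mul_nonneg h3 h4, ?_⟩
    calc base u ≤ (m-u) ^ (H-1/2) * (m-u) ^ (H-1/2) :=
          mul_le_mul h1 h2 h4 (Real.rpow_nonneg hmu.le _)
      _ = (m - u) ^ (2*H-1) := by rw [← Real.rpow_add hmu]; ring_nf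
  -- integrabilities
  have Ipow : IntervalIntegrable (fun u => (m-u) ^ (2*H-1)) volume 0 m := powInt m 0 hq
  have hne : ∀ᵐ u : ℝ, u ≠ m := by
    rw [ae_iff]
    simpa using Real.volume_singleton (x := m)
  have hIoo : ∀ᵐ u : ℝ ∂(volume.restrict (Set.uIoc (0:ℝ) m)), u ∈ Ioo 0 m := by
    filter_upwards [ae_restrict_mem measurableSet_uIoc, ae_restrict_of_ae hne] with u h1 h2
    rw [Set.uIoc_of_le hm0] at h1
    exact ⟨h1.1, lt_of_le_of_ne h1.2 h2⟩
  have hmbase : Measurable base :=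
    ((meas_rpowc (H-1/2)).comp (measurable_const.sub measurable_id)).mul
      ((meas_rpowc (H-1/2)).comp (measurable_const.sub measurable_id))
  have hmF : Measurable F := by
    apply Measurable.div _ measurable_const
    exact ((meas_rpowc (-p)).comp ((Real.measurable_log.comp
        (measurable_const.mul (measurable_const.sub measurable_id))).neg)).mul
      ((meas_rpowc (-p)).comp ((Real.measurable_log.comp
        (measurable_const.mul (measurable_const.sub measurable_id))).neg))
  have Ibase : IntervalIntegrable base volume 0 m := by
    apply Ipow.mono_fun hmbase.aestronglyMeasurable
    filter_upwards [hIoo] with u hu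
    have h1 := hbase_le u hu
    rw [Real.norm_eq_abs, Real.norm_eq_abs, abs_of_nonneg h1.1,
      abs_of_nonneg (Real.rpow_nonneg (by linarith [hu.2] : (0:ℝ) ≤ m - u) _)]
    exact h1.2
  have IbF : IntervalIntegrable (fun u => base u * F u) volume 0 m := by
    apply Ipow.mono_fun (hmbase.mul hmF).aestronglyMeasurable
    filter_upwards [hIoo] with u hu
    have h1 := hbase_le u hu
    have h2 := hF01 u hu
    rw [Real.norm_eq_abs, Real.norm_eq_abs, Pi.mul_apply, abs_of_nonneg (mul_nonneg h1.1 h2.1),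
      abs_of_nonneg (Real.rpow_nonneg (by linarith [hu.2] : (0:ℝ) ≤ m - u) _)]
    calc base u * F u ≤ base u * 1 := mul_le_mul_of_nonneg_left h2.2 h1.1
      _ = base u := mul_one _
      _ ≤ (m-u) ^ (2*H-1) := h1.2
  have IbmF : IntervalIntegrable (fun u => base u * (1 - F u)) volume 0 m := by
    simpa only [mul_one_sub] using Ibase.sub IbF
  -- Claim A
  have hcne : ε ^ (2*H) * (-Real.log ε) ^ (-(2*p)) ≠ 0 :=
    ne_of_gt (mul_pos (Real.rpow_pos_of_pos hε0 _) hLp2)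
  have hA : (∫ u in (0:ℝ)..m, Keps H p C ε t u * Keps H p C ε s u) /
      (ε ^ (2 * H) * (-Real.log ε) ^ (-(2 * p)))
      = C^2 * ∫ u in (0:ℝ)..m, base u * F u := by
    have hcongr : (∫ u in (0:ℝ)..m, Keps H p C ε t u * Keps H p C ε s u)
        = ∫ u in (0:ℝ)..m,
            (ε ^ (2*H) * (-Real.log ε) ^ (-(2*p))) * (C^2 * (base u * F u)) := by
      apply intervalIntegral.integral_congr_ae
      filter_upwards [hne] with u hu hmem
      rw [Set.uIoc_of_le hm0] at hmem
      have h2 : u < m := lt_of_le_of_ne hmem.2 hu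
      have hut : u < t := lt_of_lt_of_le h2 hmt
      have hus : u < s := lt_of_lt_of_le h2 hms
      simp only [Keps, if_pos hut, if_pos hus, hbase, hF]
      rw [show (2*H) = H + H by ring, Real.rpow_add hε0]
      field_simp
    rw [hcongr, intervalIntegral.integral_const_mul, mul_div_cancel_left₀ _ hcne,
      intervalIntegral.integral_const_mul]
  -- value of the power integral
  have h2H1 : 2*H - 1 + 1 = 2*H := by ring
  have hzero : (0:ℝ) ^ (2*H) = 0 := Real.zero_rpow (ne_of_gt h2H)
  -- pointwise bound used repeatedly
  have hptw : ∀ u ∈ Ioo (0:ℝ) m, base u * (1 - F u) ≤ (m-u) ^ (2*H-1) := by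
    intro u hu
    have h1 := hbase_le u hu
    have h2 := hF01 u hu
    nlinarith [mul_nonneg h1.1 h2.1]
  -- main estimate
  have key : (∫ u in (0:ℝ)..m, base u * (1 - F u))
      ≤ (1 - r^2) * (1/(2*H)) + δ^(2*H)/(2*H) := by
    rcases le_or_gt m δ with hcase | hcase
    · have h1 : (∫ u in (0:ℝ)..m, base u * (1 - F u))
          ≤ ∫ u in (0:ℝ)..m, (m-u)^(2*H-1) := by
        rw [intervalIntegral.integral_of_le hm0, intervalIntegral.integral_of_le hm0,
          integral_Ioc_eq_integral_Ioo, integral_Ioc_eq_integral_Ioo]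
        exact setIntegral_mono_on (IbmF.1.mono_set Ioo_subset_Ioc_self)
          (Ipow.1.mono_set Ioo_subset_Ioc_self) measurableSet_Ioo hptw
      have h2 : (∫ u in (0:ℝ)..m, (m-u)^(2*H-1)) = m^(2*H)/(2*H) := by
        rw [powVal m 0 m hq, h2H1, sub_zero, sub_self, hzero, sub_zero]
      have h3 : m^(2*H) ≤ δ^(2*H) := Real.rpow_le_rpow hm0 hcase h2H.le
      have h4 : (0:ℝ) ≤ (1 - r^2) * (1/(2*H)) := mul_nonneg hr2 (by positivity)
      have h5 : m^(2*H)/(2*H) ≤ δ^(2*H)/(2*H) := (div_le_div_iff_of_pos_right h2H).2 h3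
      linarith [h1, h2, h4, h5]
    · set c : ℝ := m - δ with hc
      have hc0 : 0 < c := by simp only [hc]; linarith
      have hcm : c < m := by simp only [hc]; linarith
      have hsub1 : uIcc (0:ℝ) c ⊆ uIcc (0:ℝ) m := by
        rw [uIcc_of_le hc0.le, uIcc_of_le hm0]; exact Icc_subset_Icc le_rfl hcm.le
      have hsub2 : uIcc c m ⊆ uIcc (0:ℝ) m := by
        rw [uIcc_of_le hcm.le, uIcc_of_le hm0]; exact Icc_subset_Icc hc0.le le_rfl
      rw [← intervalIntegral.integral_add_adjacent_intervals
        (IbmF.mono_set hsub1) (IbmF.mono_set hsub2)]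
      have hp1 : (∫ u in (0:ℝ)..c, base u * (1 - F u)) ≤ (1 - r^2) * (1/(2*H)) := by
        have hstep : (∫ u in (0:ℝ)..c, base u * (1 - F u))
            ≤ ∫ u in (0:ℝ)..c, (m-u)^(2*H-1) * (1 - r^2) := by
          rw [intervalIntegral.integral_of_le hc0.le, intervalIntegral.integral_of_le hc0.le,
            integral_Ioc_eq_integral_Ioo, integral_Ioc_eq_integral_Ioo]
          apply setIntegral_mono_on ((IbmF.mono_set hsub1).1.mono_set Ioo_subset_Ioc_self)
            ((((powInt m 0 hq).mul_const (1 - r^2)).mono_set hsub1).1.mono_set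
              Ioo_subset_Ioc_self) measurableSet_Ioo
          intro u hu
          have huIoo : u ∈ Ioo (0:ℝ) m := ⟨hu.1, lt_trans hu.2 hcm⟩
          have h1 := hbase_le u huIoo
          have h2 := hF01 u huIoo
          have hucδ : u < m - δ := by have := hu.2; simpa [hc] using this
          have hFr : r^2 ≤ F u := by
            have htu : δ ≤ t - u := by linarith [hmt]
            have hsu : δ ≤ s - u := by linarith [hms]
            have ht1' : t - u ≤ 1 := by linarith [hu.1]
            have hs1' : s - u ≤ 1 := by linarith [hu.1]
            have hδl := hlog δ hδ0 hδ1
            have hlt : -Real.log (ε*(t-u)) ≤ -Real.log (ε*δ) := by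
              have := Real.log_le_log (mul_pos hε0 hδ0)
                (mul_le_mul_of_nonneg_left htu hε0.le)
              linarith
            have hls : -Real.log (ε*(s-u)) ≤ -Real.log (ε*δ) := by
              have := Real.log_le_log (mul_pos hε0 hδ0)
                (mul_le_mul_of_nonneg_left hsu hε0.le)
              linarith
            have h5 : (-Real.log (ε*δ))^(-p) ≤ (-Real.log (ε*(t-u)))^(-p) :=
              Real.rpow_le_rpow_of_nonpos (hlog (t-u) (by linarith) ht1').1 hlt (by linarith)
            have h6 : (-Real.log (ε*δ))^(-p) ≤ (-Real.log (ε*(s-u)))^(-p) :=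
              Real.rpow_le_rpow_of_nonpos (hlog (s-u) (by linarith) hs1').1 hls (by linarith)
            have haδ : 0 ≤ (-Real.log (ε*δ))^(-p) := Real.rpow_nonneg hδl.1.le _
            have hrsq : r^2 = ((-Real.log (ε*δ))^(-p) * (-Real.log (ε*δ))^(-p))
                / (-Real.log ε)^(-(2*p)) := by
              rw [hrdef, div_pow, sq, sq, hLsq]
            rw [hrsq]
            exact (div_le_div_iff_of_pos_right hLp2).2 (mul_le_mul h5 h6 haδ
              (Real.rpow_nonneg (hlog (t-u) (by linarith) ht1').1.le _))
          exact mul_le_mul h1.2 (by linarith) (by linarith [h2.2])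
            (Real.rpow_nonneg (by linarith [huIoo.2]) _)
        have hval : (∫ u in (0:ℝ)..c, (m-u)^(2*H-1) * (1 - r^2))
            = (m^(2*H) - δ^(2*H))/(2*H) * (1 - r^2) := by
          rw [intervalIntegral.integral_mul_const, powVal m 0 c hq, h2H1, sub_zero,
            show m - c = δ by simp [hc]]
        have hmle : m^(2*H) ≤ 1 := Real.rpow_le_one hm0 hm1 h2H.le
        have hδnn : (0:ℝ) ≤ δ^(2*H) := Real.rpow_nonneg hδ0.le _
        have : (m^(2*H) - δ^(2*H))/(2*H) * (1 - r^2) ≤ 1/(2*H) * (1 - r^2) := by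
          apply mul_le_mul_of_nonneg_right _ hr2
          exact (div_le_div_iff_of_pos_right h2H).2 (by linarith)
        calc (∫ u in (0:ℝ)..c, base u * (1 - F u))
            ≤ (m^(2*H) - δ^(2*H))/(2*H) * (1 - r^2) := by rw [← hval]; exact hstep
          _ ≤ 1/(2*H) * (1 - r^2) := this
          _ = (1 - r^2) * (1/(2*H)) := by ring
      have hp2 : (∫ u in c..m, base u * (1 - F u)) ≤ δ^(2*H)/(2*H) := by
        have hstep : (∫ u in c..m, base u * (1 - F u))
            ≤ ∫ u in c..m, (m-u)^(2*H-1) := by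
          rw [intervalIntegral.integral_of_le hcm.le, intervalIntegral.integral_of_le hcm.le,
            integral_Ioc_eq_integral_Ioo, integral_Ioc_eq_integral_Ioo]
          apply setIntegral_mono_on ((IbmF.mono_set hsub2).1.mono_set Ioo_subset_Ioc_self)
            ((powInt m c hq).1.mono_set Ioo_subset_Ioc_self) measurableSet_Ioo
          intro u hu
          exact hptw u ⟨lt_trans hc0 hu.1, hu.2⟩
        have hval : (∫ u in c..m, (m-u)^(2*H-1)) = δ^(2*H)/(2*H) := by
          rw [powVal m c m hq, h2H1, sub_self, hzero, sub_zero,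
            show m - c = δ by simp [hc]]
        linarith [hstep]
      linarith [hp1, hp2]
  -- nonnegativity of the difference
  have hnn : 0 ≤ ∫ u in (0:ℝ)..m, base u * (1 - F u) := by
    rw [intervalIntegral.integral_of_le hm0, integral_Ioc_eq_integral_Ioo]
    apply setIntegral_nonneg measurableSet_Ioo
    intro u hu
    have h1 := hbase_le u hu
    have h2 := hF01 u hu
    exact mul_nonneg h1.1 (by linarith [h2.2])
  rw [Real.dist_eq, hA, ← mul_sub, ← intervalIntegral.integral_sub Ibase IbF]
  simp only [← mul_one_sub]
  rw [abs_of_nonneg (mul_nonneg (by positivity) hnn)]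
  exact mul_le_mul_of_nonneg_left key (by positivity)


set_option maxHeartbeats 1000000 in
/-- Condition (K1) for log-modulated rough volatility: the normalized covariances
`k^ε(t,s)/(ε^{2H}(-log ε)^{-2p})` converge uniformly on `[0,1]²` to the covariance
`k(t,s)` of the Riemann–Liouville process. -/
theorem stmt_1 (H p C : ℝ) (hH0 : 0 < H) (hH : H ≤ 1 / 2) (hp : 1 < p) (hC : 0 < C) :
    TendstoUniformlyOn
      (fun ε : ℝ => fun ts : ℝ × ℝ =>
        (∫ u in (0:ℝ)..(min ts.2 ts.1), Keps H p C ε ts.1 u * Keps H p C ε ts.2 u) /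
          (ε ^ (2 * H) * (-Real.log ε) ^ (-(2 * p))))
      (fun ts : ℝ × ℝ =>
        C ^ 2 * ∫ u in (0:ℝ)..(min ts.2 ts.1),
          (ts.1 - u) ^ (H - 1 / 2) * (ts.2 - u) ^ (H - 1 / 2))
      (nhdsWithin 0 (Set.Ioo 0 1))
      (Set.Icc 0 1 ×ˢ Set.Icc 0 1) := by
  rw [Metric.tendstoUniformlyOn_iff]
  intro η hη
  have h2H : (0:ℝ) < 2*H := by linarith
  obtain ⟨δ, hδ0, hδ1, hδsmall⟩ :
      ∃ δ : ℝ, 0 < δ ∧ δ ≤ 1 ∧ C^2 * (δ^(2*H)/(2*H)) < η/2 := by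
    have h1 : Tendsto (fun δ : ℝ => C^2 * (δ^(2*H)/(2*H))) (nhdsWithin 0 (Ioi 0)) (nhds 0) := by
      have hc : Continuous (fun δ : ℝ => C^2 * (δ^(2*H)/(2*H))) :=
        continuous_const.mul ((Real.continuous_rpow_const h2H.le).div_const _)
      have h2 := hc.tendsto 0
      simp only [Real.zero_rpow (ne_of_gt h2H), zero_div, mul_zero] at h2
      exact h2.mono_left nhdsWithin_le_nhds
    have h2 := h1.eventually_lt_const (by linarith : (0:ℝ) < η/2)
    have h3 : ∀ᶠ δ : ℝ in nhdsWithin 0 (Ioi 0), δ ≤ 1 :=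
      ((eventually_lt_nhds (by norm_num : (0:ℝ) < 1)).mono fun x hx => hx.le).filter_mono
        nhdsWithin_le_nhds
    obtain ⟨δ, h4, h5, h6⟩ := (eventually_mem_nhdsWithin.and (h3.and h2)).exists
    exact ⟨δ, h4, h5, h6⟩
  have hLtop : Tendsto (fun ε : ℝ => -Real.log ε) (nhdsWithin 0 (Ioi 0)) atTop :=
    tendsto_neg_atBot_atTop.comp Real.tendsto_log_nhdsGT_zero
  have hbase : Tendsto (fun ε : ℝ => 1 + (-Real.log δ)/(-Real.log ε))
      (nhdsWithin 0 (Ioi 0)) (nhds 1) := by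
    have h1 := Tendsto.div_atTop (tendsto_const_nhds (x := -Real.log δ)) hLtop
    simpa using (tendsto_const_nhds (x := (1:ℝ))).add h1
  have hev : ∀ᶠ ε : ℝ in nhdsWithin 0 (Ioi 0),
      (1 + (-Real.log δ)/(-Real.log ε))^(-p)
        = (-Real.log (ε*δ))^(-p) / (-Real.log ε)^(-p) := by
    filter_upwards [eventually_mem_nhdsWithin,
      (eventually_lt_nhds one_pos).filter_mono nhdsWithin_le_nhds] with ε hε0 hε1
    have hε0' : (0:ℝ) < ε := hε0
    have hL : 0 < -Real.log ε := by have := Real.log_neg hε0' hε1; linarith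
    have hεδ : 0 < ε*δ := mul_pos hε0' hδ0
    have hεδ1 : ε*δ < 1 := by nlinarith
    have hLδ : 0 < -Real.log (ε*δ) := by have := Real.log_neg hεδ hεδ1; linarith
    rw [← Real.div_rpow hLδ.le hL.le]
    congr 1
    have hLne : Real.log ε ≠ 0 := ne_of_lt (by linarith)
    rw [Real.log_mul (ne_of_gt hε0') (ne_of_gt hδ0)]
    field_simp [hLne]
  have hrt : Tendsto (fun ε : ℝ => (-Real.log (ε*δ))^(-p) / (-Real.log ε)^(-p))
      (nhdsWithin 0 (Ioi 0)) (nhds 1) := by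
    have hc : ContinuousAt (fun x : ℝ => x^(-p)) 1 :=
      Real.continuousAt_rpow_const 1 (-p) (Or.inl one_ne_zero)
    have h1 := hc.tendsto.comp hbase
    rw [Real.one_rpow] at h1
    exact Filter.Tendsto.congr' hev h1
  have htail : ∀ᶠ ε : ℝ in nhdsWithin 0 (Ioi 0),
      C^2 * ((1 - ((-Real.log (ε*δ))^(-p)/(-Real.log ε)^(-p))^2) * (1/(2*H))) < η/2 := by
    have hc : Continuous (fun x : ℝ => C^2 * ((1 - x^2) * (1/(2*H)))) := by continuity
    have h1 := (hc.tendsto 1).comp hrt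
    simp only [Function.comp_def] at h1
    have h0 : C^2 * ((1 - (1:ℝ)^2) * (1/(2*H))) = 0 := by norm_num
    rw [h0] at h1
    exact h1.eventually_lt_const (by linarith)
  have hmono : nhdsWithin (0:ℝ) (Ioo 0 1) ≤ nhdsWithin 0 (Ioi 0) :=
    nhdsWithin_mono 0 Ioo_subset_Ioi_self
  filter_upwards [eventually_mem_nhdsWithin, htail.filter_mono hmono] with ε hεm hεs
  intro ts hts
  have hkey := key_est H p C hH0 hH hp hC δ ε hδ0 hδ1 hεm.1 hεm.2 ts.1 ts.2
    hts.1.1 hts.1.2 hts.2.1 hts.2.2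
  refine lt_of_le_of_lt hkey ?_
  rw [mul_add]
  linarith
end

section
/- Let H ∈ (0,1/2], p > 1 and C > 0, and for ε ∈ (0,1) let k^ε(t,s) = ∫_0^{min(s,t)} K^ε(t,u) K^ε(s,u) du with K^ε(r,u) = C ε^H (r−u)^{H−1/2}(−log(ε(r−u)))^{−p} for u < r and 0 otherwise. Then for every fixed (t,s) ∈ [0,1]², the normalized covariance is monotone in ε: for all 0 < ε₁ ≤ ε₂ < 1, k^{ε₁}(t,s)/(ε₁^{2H}(−log ε₁)^{−2p}) ≥ k^{ε₂}(t,s)/(ε₂^{2H}(−log ε₂)^{−2p}). -/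
open Real Filter Set MeasureTheory

/-- Measurability of the kernel in its last variable. -/
lemma keps_measurable (H p C ε r : ℝ) : Measurable (fun u => Keps H p C ε r u) := by
  unfold Keps
  refine Measurable.ite measurableSet_Iio ?_ measurable_const
  have h : Measurable (fun u : ℝ => -Real.log (ε * (r - u))) :=
    (((measurable_const.sub measurable_id).const_mul ε).log).neg
  fun_prop

/-- Monotonicity of the log-ratio factor in `ε`. -/
lemma ratio_mono (p : ℝ) (hp : 0 < p) {x ε₁ ε₂ : ℝ} (hx0 : 0 < x) (hx1 : x ≤ 1)
    (hε₁ : 0 < ε₁) (h12 : ε₁ ≤ ε₂) (hε₂ : ε₂ < 1) :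
    (-Real.log (ε₂ * x)) ^ (-p) / (-Real.log ε₂) ^ (-p)
      ≤ (-Real.log (ε₁ * x)) ^ (-p) / (-Real.log ε₁) ^ (-p) := by
  have hε₂0 : 0 < ε₂ := lt_of_lt_of_le hε₁ h12
  have hε₁1 : ε₁ < 1 := lt_of_le_of_lt h12 hε₂
  have hl₁ : 0 < -Real.log ε₁ := by have := Real.log_neg hε₁ hε₁1; linarith
  have hl₂ : 0 < -Real.log ε₂ := by have := Real.log_neg hε₂0 hε₂; linarith
  have hlx : 0 ≤ -Real.log x := by have := Real.log_nonpos hx0.le hx1; linarith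
  have key : ∀ ε : ℝ, 0 < ε → -Real.log (ε * x) = -Real.log ε + -Real.log x := by
    intro ε hε
    rw [Real.log_mul hε.ne' hx0.ne']; ring
  have h1 : -Real.log (ε₁ * x) = -Real.log ε₁ + -Real.log x := key _ hε₁
  have h2 : -Real.log (ε₂ * x) = -Real.log ε₂ + -Real.log x := key _ hε₂0
  rw [h1, h2, ← Real.div_rpow (by linarith) hl₂.le, ← Real.div_rpow (by linarith) hl₁.le]
  apply Real.rpow_le_rpow_of_nonpos
  · positivity
  · rw [add_div, add_div, div_self hl₁.ne', div_self hl₂.ne']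
    have : -Real.log x / -Real.log ε₁ ≤ -Real.log x / -Real.log ε₂ :=
      div_le_div_of_nonneg_left hlx hl₂ (by linarith [Real.log_le_log hε₁ h12])
    linarith
  · linarith

/-- The key pointwise inequality for the normalized integrands. -/
lemma keps_pointwise (H p C : ℝ) (hH0 : 0 < H) (hH : H ≤ 1 / 2) (hp : 1 < p) (hC : 0 < C)
    (t s u ε₁ ε₂ : ℝ) (ht1 : t ≤ 1) (hs1 : s ≤ 1) (hu : 0 ≤ u)
    (hε₁ : 0 < ε₁) (h12 : ε₁ ≤ ε₂) (hε₂ : ε₂ < 1) :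
    Keps H p C ε₂ t u * Keps H p C ε₂ s u / (ε₂ ^ (2 * H) * (-Real.log ε₂) ^ (-(2 * p)))
      ≤ Keps H p C ε₁ t u * Keps H p C ε₁ s u /
          (ε₁ ^ (2 * H) * (-Real.log ε₁) ^ (-(2 * p))) := by
  have hε₂0 : 0 < ε₂ := lt_of_lt_of_le hε₁ h12
  have hε₁1 : ε₁ < 1 := lt_of_le_of_lt h12 hε₂
  have hl₁ : 0 < -Real.log ε₁ := by have := Real.log_neg hε₁ hε₁1; linarith
  have hl₂ : 0 < -Real.log ε₂ := by have := Real.log_neg hε₂0 hε₂; linarith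
  by_cases hut : u < t
  · by_cases hus : u < s
    · -- main case: rewrite everything in factored form
      have hx0 : 0 < t - u := by linarith
      have hx1 : t - u ≤ 1 := by linarith
      have hy0 : 0 < s - u := by linarith
      have hy1 : s - u ≤ 1 := by linarith
      have factor : ∀ ε : ℝ, 0 < ε → ε < 1 →
          Keps H p C ε t u * Keps H p C ε s u /
              (ε ^ (2 * H) * (-Real.log ε) ^ (-(2 * p)))
            = C * C * ((t - u) ^ (H - 1 / 2) * (s - u) ^ (H - 1 / 2)) *
                (((-Real.log (ε * (t - u))) ^ (-p) / (-Real.log ε) ^ (-p)) *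
                  ((-Real.log (ε * (s - u))) ^ (-p) / (-Real.log ε) ^ (-p))) := by
        intro ε hε hε1
        have hl : 0 < -Real.log ε := by have := Real.log_neg hε hε1; linarith
        have hεH : ε ^ (2 * H) = ε ^ H * ε ^ H := by
          rw [← Real.rpow_add hε]; ring_nf
        have hlp : (-Real.log ε) ^ (-(2 * p)) = (-Real.log ε) ^ (-p) * (-Real.log ε) ^ (-p) := by
          rw [← Real.rpow_add hl]; ring_nf
        have hεHpos : (0:ℝ) < ε ^ H := Real.rpow_pos_of_pos hε H
        have hlppos : (0:ℝ) < (-Real.log ε) ^ (-p) := Real.rpow_pos_of_pos hl _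
        simp only [Keps, if_pos hut, if_pos hus]
        rw [hεH, hlp]
        field_simp
      rw [factor ε₁ hε₁ hε₁1, factor ε₂ hε₂0 hε₂]
      have hxy : 0 ≤ (t - u) ^ (H - 1 / 2) * (s - u) ^ (H - 1 / 2) := by positivity
      have hr1 := ratio_mono p (by linarith) hx0 hx1 hε₁ h12 hε₂
      have hr2 := ratio_mono p (by linarith) hy0 hy1 hε₁ h12 hε₂
      have hbase2 : (0:ℝ) ≤ -Real.log (ε₂ * (s - u)) := by
        have := Real.log_nonpos (by positivity : (0:ℝ) ≤ ε₂ * (s - u)) (by nlinarith)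
        linarith
      have hbase1 : (0:ℝ) ≤ -Real.log (ε₁ * (t - u)) := by
        have := Real.log_nonpos (by positivity : (0:ℝ) ≤ ε₁ * (t - u)) (by nlinarith)
        linarith
      have hnn1 : (0:ℝ) ≤ (-Real.log (ε₂ * (s - u))) ^ (-p) / (-Real.log ε₂) ^ (-p) :=
        div_nonneg (Real.rpow_nonneg hbase2 _) (Real.rpow_nonneg (by linarith) _)
      have hnn2 : (0:ℝ) ≤ (-Real.log (ε₁ * (t - u))) ^ (-p) / (-Real.log ε₁) ^ (-p) :=
        div_nonneg (Real.rpow_nonneg hbase1 _) (Real.rpow_nonneg (by linarith) _)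
      have := mul_le_mul hr1 hr2 hnn1 hnn2
      have hCC : (0:ℝ) ≤ C * C * ((t - u) ^ (H - 1 / 2) * (s - u) ^ (H - 1 / 2)) := by
        positivity
      calc C * C * ((t - u) ^ (H - 1 / 2) * (s - u) ^ (H - 1 / 2)) *
            (((-Real.log (ε₂ * (t - u))) ^ (-p) / (-Real.log ε₂) ^ (-p)) *
              ((-Real.log (ε₂ * (s - u))) ^ (-p) / (-Real.log ε₂) ^ (-p)))
          ≤ C * C * ((t - u) ^ (H - 1 / 2) * (s - u) ^ (H - 1 / 2)) *
            (((-Real.log (ε₁ * (t - u))) ^ (-p) / (-Real.log ε₁) ^ (-p)) *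
              ((-Real.log (ε₁ * (s - u))) ^ (-p) / (-Real.log ε₁) ^ (-p))) :=
            mul_le_mul_of_nonneg_left this hCC
        _ = _ := rfl
    · simp [Keps, if_neg hus, zero_div]
  · simp [Keps, if_neg hut, zero_div]

/-- Integrability of the kernel product on `[0, min s t]`. -/
lemma keps_integrable (H p C ε t s : ℝ) (hH0 : 0 < H) (hH : H ≤ 1 / 2) (hp : 1 < p)
    (hC : 0 < C) (hε : 0 < ε) (hε1 : ε < 1) (ht1 : t ≤ 1) (hs1 : s ≤ 1)
    (hm : 0 < min s t) :
    IntervalIntegrable (fun u => Keps H p C ε t u * Keps H p C ε s u) volume 0 (min s t) := by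
  set m := min s t with hm'
  have hl : 0 < -Real.log ε := by have := Real.log_neg hε hε1; linarith
  set B : ℝ := C * C * (ε ^ H * ε ^ H) * ((-Real.log ε) ^ (-p) * (-Real.log ε) ^ (-p)) with hB
  have hBpos : 0 < B := by
    have h1 : (0:ℝ) < ε ^ H := Real.rpow_pos_of_pos hε H
    have h2 : (0:ℝ) < (-Real.log ε) ^ (-p) := Real.rpow_pos_of_pos hl _
    positivity
  -- the dominating function
  have hg : IntervalIntegrable (fun u => B * (m - u) ^ (2 * H - 1)) volume 0 m := by
    have h0 : IntervalIntegrable (fun x : ℝ => x ^ (2 * H - 1)) volume 0 m :=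
      intervalIntegral.intervalIntegrable_rpow' (by linarith)
    have h1 := h0.comp_sub_left m
    simp only [sub_zero, sub_self] at h1
    exact (h1.symm).const_mul B
  refine hg.mono_fun ?_ ?_
  · exact ((keps_measurable H p C ε t).mul (keps_measurable H p C ε s)).aestronglyMeasurable
  · rw [Set.uIoc_of_le hm.le]
    refine (ae_restrict_iff' measurableSet_Ioc).mpr (ae_of_all _ ?_)
    intro u hu
    have hu0 : 0 < u := hu.1
    have hum : u ≤ m := hu.2
    simp only [Real.norm_eq_abs]
    rcases eq_or_lt_of_le hum with h | h
    · -- u = m : left side vanishes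
      have : Keps H p C ε t u * Keps H p C ε s u = 0 := by
        rcases min_cases s t with ⟨h1, h2⟩ | ⟨h1, h2⟩
        · have : ¬ u < s := by rw [not_lt, h]; exact h1.ge
          simp [Keps, if_neg this]
        · have : ¬ u < t := by rw [not_lt, h]; exact h1.ge
          simp [Keps, if_neg this]
      rw [this, abs_zero]
      positivity
    · -- u < m : main bound
      have hut : u < t := lt_of_lt_of_le h (min_le_right s t)
      have hus : u < s := lt_of_lt_of_le h (min_le_left s t)
      have hx0 : 0 < t - u := by linarith
      have hy0 : 0 < s - u := by linarith
      have hmu : 0 < m - u := by linarith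
      have hl1 : 0 < -Real.log (ε * (t - u)) := by
        have hlog : Real.log (ε * (t - u)) < 0 :=
          Real.log_neg (by positivity) (by nlinarith)
        linarith
      have hl2 : 0 < -Real.log (ε * (s - u)) := by
        have hlog : Real.log (ε * (s - u)) < 0 :=
          Real.log_neg (by positivity) (by nlinarith)
        linarith
      have habs : Keps H p C ε t u * Keps H p C ε s u
          = C * C * (ε ^ H * ε ^ H) *
            ((t - u) ^ (H - 1 / 2) * (s - u) ^ (H - 1 / 2)) *
            ((-Real.log (ε * (t - u))) ^ (-p) * (-Real.log (ε * (s - u))) ^ (-p)) := by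
        simp only [Keps, if_pos hut, if_pos hus]; ring
      have hbx : (t - u) ^ (H - 1 / 2) ≤ (m - u) ^ (H - 1 / 2) :=
        Real.rpow_le_rpow_of_nonpos hmu (by have := min_le_right s t; linarith)
          (by linarith)
      have hby : (s - u) ^ (H - 1 / 2) ≤ (m - u) ^ (H - 1 / 2) :=
        Real.rpow_le_rpow_of_nonpos hmu (by have := min_le_left s t; linarith)
          (by linarith)
      have hlt : (-Real.log (ε * (t - u))) ^ (-p) ≤ (-Real.log ε) ^ (-p) := by
        apply Real.rpow_le_rpow_of_nonpos hl ?_ (by linarith)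
        have : Real.log (ε * (t - u)) ≤ Real.log ε := by
          rw [Real.log_mul hε.ne' hx0.ne']
          have := Real.log_nonpos hx0.le (by linarith : t - u ≤ 1)
          linarith
        linarith
      have hls : (-Real.log (ε * (s - u))) ^ (-p) ≤ (-Real.log ε) ^ (-p) := by
        apply Real.rpow_le_rpow_of_nonpos hl ?_ (by linarith)
        have : Real.log (ε * (s - u)) ≤ Real.log ε := by
          rw [Real.log_mul hε.ne' hy0.ne']
          have := Real.log_nonpos hy0.le (by linarith : s - u ≤ 1)
          linarith
        linarith
      have hf_nonneg : 0 ≤ Keps H p C ε t u * Keps H p C ε s u := by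
        rw [habs]
        have h1 : (0:ℝ) < ε ^ H := Real.rpow_pos_of_pos hε H
        positivity
      rw [abs_of_nonneg hf_nonneg, habs]
      have hrw : (m - u) ^ (H - 1 / 2) * (m - u) ^ (H - 1 / 2) = (m - u) ^ (2 * H - 1) := by
        rw [← Real.rpow_add hmu]; ring_nf
      have step1 : (t - u) ^ (H - 1 / 2) * (s - u) ^ (H - 1 / 2) ≤ (m - u) ^ (2 * H - 1) := by
        rw [← hrw]
        exact mul_le_mul hbx hby (by positivity) (by positivity)
      have step2 : (-Real.log (ε * (t - u))) ^ (-p) * (-Real.log (ε * (s - u))) ^ (-p)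
          ≤ (-Real.log ε) ^ (-p) * (-Real.log ε) ^ (-p) :=
        mul_le_mul hlt hls (by positivity) (by positivity)
      have hBle : C * C * (ε ^ H * ε ^ H) *
            ((t - u) ^ (H - 1 / 2) * (s - u) ^ (H - 1 / 2)) *
            ((-Real.log (ε * (t - u))) ^ (-p) * (-Real.log (ε * (s - u))) ^ (-p))
          ≤ B * (m - u) ^ (2 * H - 1) := by
        have h1 : (0:ℝ) < ε ^ H := Real.rpow_pos_of_pos hε H
        calc C * C * (ε ^ H * ε ^ H) *
              ((t - u) ^ (H - 1 / 2) * (s - u) ^ (H - 1 / 2)) *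
              ((-Real.log (ε * (t - u))) ^ (-p) * (-Real.log (ε * (s - u))) ^ (-p))
            ≤ C * C * (ε ^ H * ε ^ H) * (m - u) ^ (2 * H - 1) *
              ((-Real.log ε) ^ (-p) * (-Real.log ε) ^ (-p)) := by
              apply mul_le_mul
              · exact mul_le_mul_of_nonneg_left step1 (by positivity)
              · exact step2
              · positivity
              · positivity
          _ = B * (m - u) ^ (2 * H - 1) := by rw [hB]; ring
      refine le_trans hBle ?_
      have : 0 ≤ B * (m - u) ^ (2 * H - 1) := by positivity
      exact le_abs_self _

/-- Monotonicity in `ε` of the normalized covariance of the rescaled log-modulated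
Volterra kernel: for `0 < ε₁ ≤ ε₂ < 1`,
`k^{ε₁}(t,s)/(ε₁^{2H}(-log ε₁)^{-2p}) ≥ k^{ε₂}(t,s)/(ε₂^{2H}(-log ε₂)^{-2p})`. -/
theorem stmt_2 (H p C : ℝ) (hH0 : 0 < H) (hH : H ≤ 1 / 2) (hp : 1 < p) (hC : 0 < C)
    (t s : ℝ) (ht : t ∈ Set.Icc (0:ℝ) 1) (hs : s ∈ Set.Icc (0:ℝ) 1)
    (ε₁ ε₂ : ℝ) (hε₁ : 0 < ε₁) (hε₁₂ : ε₁ ≤ ε₂) (hε₂ : ε₂ < 1) :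
    (∫ u in (0:ℝ)..(min s t), Keps H p C ε₂ t u * Keps H p C ε₂ s u) /
        (ε₂ ^ (2 * H) * (-Real.log ε₂) ^ (-(2 * p)))
      ≤ (∫ u in (0:ℝ)..(min s t), Keps H p C ε₁ t u * Keps H p C ε₁ s u) /
        (ε₁ ^ (2 * H) * (-Real.log ε₁) ^ (-(2 * p))) := by
  have hε₂0 : 0 < ε₂ := lt_of_lt_of_le hε₁ hε₁₂
  have hε₁1 : ε₁ < 1 := lt_of_le_of_lt hε₁₂ hε₂
  have hm0 : 0 ≤ min s t := le_min hs.1 ht.1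
  rcases eq_or_lt_of_le hm0 with h | h
  · simp [← h]
  · rw [div_eq_mul_inv, div_eq_mul_inv, ← intervalIntegral.integral_mul_const,
      ← intervalIntegral.integral_mul_const]
    refine intervalIntegral.integral_mono_on hm0 ?_ ?_ ?_
    · exact (keps_integrable H p C ε₂ t s hH0 hH hp hC hε₂0 hε₂ ht.2 hs.2 h).mul_const _
    · exact (keps_integrable H p C ε₁ t s hH0 hH hp hC hε₁ hε₁1 ht.2 hs.2 h).mul_const _
    · intro u hu
      have := keps_pointwise H p C hH0 hH hp hC t s u ε₁ ε₂ ht.2 hs.2 hu.1 hε₁ hε₁₂ hε₂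
      simpa [div_eq_mul_inv] using this
end

section
/- Let H ∈ (0,1/2) and p > 1. There exists ε₀ ∈ (0,1) such that for every ε ∈ (0,ε₀) and all 0 ≤ s < t ≤ 1, ∫_0^s ( (t−u)^{H−1/2} ((−log(ε(t−u)))/(−log ε))^{−p} − (s−u)^{H−1/2} ((−log(ε(s−u)))/(−log ε))^{−p} )² du ≤ ∫_0^s ( (t−u)^{H−1/2} − (s−u)^{H−1/2} )² du. -/
open Real Filter Set MeasureTheory
open scoped Interval

lemma sq_rpow {x : ℝ} (hx : 0 ≤ x) (y : ℝ) : (x ^ y) ^ 2 = x ^ (2 * y) := by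
  rw [← Real.rpow_two, ← Real.rpow_mul hx, mul_comm]


lemma mfac_le_one {p ε x : ℝ} (hp : 0 < p) (hε : 0 < ε) (hL0 : 0 < -Real.log ε)
    (hx : 0 < x) (hx1 : x ≤ 1) :
    ((-Real.log (ε * x)) / (-Real.log ε)) ^ (-p) ≤ 1 := by
  apply Real.rpow_le_one_of_one_le_of_nonpos
  · rw [one_le_div hL0]
    have h := Real.log_mul (ne_of_gt hε) (ne_of_gt hx)
    have hlx : Real.log x ≤ 0 := Real.log_nonpos (le_of_lt hx) hx1
    rw [h]; linarith
  · linarith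

lemma mfac_pos {p ε x : ℝ} (hε : 0 < ε) (hL0 : 0 < -Real.log ε)
    (hx : 0 < x) (hx1 : x ≤ 1) :
    0 < ((-Real.log (ε * x)) / (-Real.log ε)) ^ (-p) := by
  apply Real.rpow_pos_of_pos
  apply div_pos _ hL0
  have h := Real.log_mul (ne_of_gt hε) (ne_of_gt hx)
  have hlx : Real.log x ≤ 0 := Real.log_nonpos (le_of_lt hx) hx1
  rw [h]; linarith

/-- purely algebraic core comparison -/
lemma core {ga gb ma mb : ℝ} (hga : 0 < ga) (hgab : gb ≤ ga)
    (hma1 : ma ≤ 1) (hmbpos : 0 < mb) (hmb1 : mb ≤ 1) (hmamb : ma ≤ mb)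
    (hgb : 0 < gb) (step1 : gb * mb ≤ ga * ma) :
    (gb * mb - ga * ma) ^ 2 ≤ (gb - ga) ^ 2 := by
  have step2 : gb * (1 - mb) ≤ ga * (1 - ma) :=
    mul_le_mul hgab (by linarith) (by linarith) (le_of_lt hga)
  have h1 : -(ga - gb) ≤ gb * mb - ga * ma := by nlinarith
  have h2 : gb * mb - ga * ma ≤ ga - gb := by nlinarith
  calc (gb * mb - ga * ma) ^ 2 ≤ (ga - gb) ^ 2 := sq_le_sq' h1 h2
    _ = (gb - ga) ^ 2 := by ring

/-- algebraic core of the monotonicity (step 1), with `A = a^c`, `B = b^c` etc. -/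
lemma mono_core {A B P Q L0p : ℝ} (hA : 0 < A) (hB : 0 < B) (hL0p : 0 < L0p)
    (hP : 0 < P) (hQ : 0 < Q)
    (hstepB : P ≤ Q * (B / A)) :
    (B * (Q * L0p⁻¹))⁻¹ ≤ (A * (P * L0p⁻¹))⁻¹ := by
  apply inv_anti₀ (by positivity)
  have h : A * P ≤ B * Q := by
    have := mul_le_mul_of_nonneg_left hstepB (le_of_lt hA)
    calc A * P ≤ A * (Q * (B / A)) := this
      _ = B * Q := by field_simp
  calc A * (P * L0p⁻¹) = (A * P) * L0p⁻¹ := by ring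
    _ ≤ (B * Q) * L0p⁻¹ := mul_le_mul_of_nonneg_right h (le_of_lt (inv_pos.mpr hL0p))
    _ = B * (Q * L0p⁻¹) := by ring

set_option maxHeartbeats 1000000 in
/-- the key pointwise comparison -/
lemma key (H p ε a b : ℝ) (hH : 0 < H) (hH2 : H < 1/2) (hp : 1 < p)
    (hε : 0 < ε) (hεb : p < (1/2 - H) * (-Real.log ε))
    (ha : 0 < a) (hab : a ≤ b) (hb1 : b ≤ 1) :
    (b ^ (H - 1/2) * ((-Real.log (ε * b)) / (-Real.log ε)) ^ (-p)
      - a ^ (H - 1/2) * ((-Real.log (ε * a)) / (-Real.log ε)) ^ (-p)) ^ 2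
    ≤ (b ^ (H - 1/2) - a ^ (H - 1/2)) ^ 2 := by
  have hc : (0:ℝ) < 1/2 - H := by linarith
  have hb : 0 < b := lt_of_lt_of_le ha hab
  have ha1 : a ≤ 1 := le_trans hab hb1
  have hL0 : 0 < -Real.log ε := by nlinarith
  have hla : Real.log (ε * a) = Real.log ε + Real.log a :=
    Real.log_mul (ne_of_gt hε) (ne_of_gt ha)
  have hlb : Real.log (ε * b) = Real.log ε + Real.log b :=
    Real.log_mul (ne_of_gt hε) (ne_of_gt hb)
  have hloga : Real.log a ≤ 0 := Real.log_nonpos (le_of_lt ha) ha1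
  have hlogb : Real.log b ≤ 0 := Real.log_nonpos (le_of_lt hb) hb1
  have hlab : Real.log a ≤ Real.log b := Real.log_le_log ha hab
  have hLa : -Real.log ε ≤ -Real.log (ε * a) := by rw [hla]; linarith
  have hLb : -Real.log ε ≤ -Real.log (ε * b) := by rw [hlb]; linarith
  have hLba : -Real.log (ε * b) ≤ -Real.log (ε * a) := by rw [hla, hlb]; linarith
  have hLbpos : 0 < -Real.log (ε * b) := lt_of_lt_of_le hL0 hLb
  have hLapos : 0 < -Real.log (ε * a) := lt_of_lt_of_le hL0 hLa
  have hma1 : ((-Real.log (ε * a)) / (-Real.log ε)) ^ (-p) ≤ 1 :=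
    mfac_le_one (by linarith) hε hL0 ha ha1
  have hmb1 : ((-Real.log (ε * b)) / (-Real.log ε)) ^ (-p) ≤ 1 :=
    mfac_le_one (by linarith) hε hL0 hb hb1
  have hmbpos : 0 < ((-Real.log (ε * b)) / (-Real.log ε)) ^ (-p) :=
    mfac_pos hε hL0 hb hb1
  have hmamb : ((-Real.log (ε * a)) / (-Real.log ε)) ^ (-p)
      ≤ ((-Real.log (ε * b)) / (-Real.log ε)) ^ (-p) := by
    apply Real.rpow_le_rpow_of_nonpos (div_pos hLbpos hL0) _ (by linarith : -p ≤ 0)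
    gcongr
  have hgab : b ^ (H - 1/2) ≤ a ^ (H - 1/2) :=
    Real.rpow_le_rpow_of_nonpos ha hab (by linarith)
  have hgapos : 0 < a ^ (H - 1/2) := Real.rpow_pos_of_pos ha _
  have hgbpos : 0 < b ^ (H - 1/2) := Real.rpow_pos_of_pos hb _
  -- Step (i): the modulated kernel is decreasing
  have step1 : b ^ (H - 1/2) * ((-Real.log (ε * b)) / (-Real.log ε)) ^ (-p)
      ≤ a ^ (H - 1/2) * ((-Real.log (ε * a)) / (-Real.log ε)) ^ (-p) := by
    have hδ : (0:ℝ) < (1/2 - H) / p := div_pos hc (by linarith)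
    have hba1 : (1:ℝ) ≤ b / a := (one_le_div ha).mpr hab
    have hbapos : (0:ℝ) < b / a := by positivity
    have hr : Real.log (b / a) = Real.log b - Real.log a :=
      Real.log_div (ne_of_gt hb) (ne_of_gt ha)
    have hrpos : 0 ≤ Real.log (b / a) := Real.log_nonneg hba1
    have hexp_ge : 1 + Real.log (b/a) * ((1/2 - H)/p) ≤ (b / a) ^ ((1/2 - H) / p) := by
      rw [Real.rpow_def_of_pos hbapos]
      have := Real.add_one_le_exp (Real.log (b/a) * ((1/2 - H)/p))
      linarith
    have hLbδ : 1 ≤ (-Real.log (ε * b)) * ((1/2 - H) / p) := by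
      have h2 : p < (1/2 - H) * (-Real.log (ε * b)) := by nlinarith
      rw [show (-Real.log (ε * b)) * ((1/2 - H)/p) = (-Real.log (ε * b)) * (1/2 - H) / p by ring,
        le_div_iff₀ (by linarith : (0:ℝ) < p)]
      nlinarith
    have hstepA : -Real.log (ε * a) ≤ (-Real.log (ε * b)) * (b / a) ^ ((1/2 - H) / p) := by
      have h1 : (-Real.log (ε * b)) * (1 + Real.log (b/a) * ((1/2 - H)/p))
          ≤ (-Real.log (ε * b)) * (b/a) ^ ((1/2 - H)/p) :=
        mul_le_mul_of_nonneg_left hexp_ge (le_of_lt hLbpos)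
      have h2 : -Real.log (ε * a)
          ≤ (-Real.log (ε * b)) * (1 + Real.log (b/a) * ((1/2 - H)/p)) := by
        have he : -Real.log (ε * a) = -Real.log (ε * b) + (Real.log b - Real.log a) := by
          rw [hla, hlb]; ring
        rw [he, ← hr]
        nlinarith [mul_le_mul_of_nonneg_right hLbδ hrpos]
      linarith
    have hstepB : (-Real.log (ε * a)) ^ p
        ≤ (-Real.log (ε * b)) ^ p * (b ^ (1/2 - H) / a ^ (1/2 - H)) := by
      have h1 : (-Real.log (ε * a)) ^ p
          ≤ ((-Real.log (ε * b)) * (b / a) ^ ((1/2 - H) / p)) ^ p :=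
        Real.rpow_le_rpow (le_of_lt hLapos) hstepA (by linarith)
      have h2 : ((-Real.log (ε * b)) * (b / a) ^ ((1/2 - H) / p)) ^ p
          = (-Real.log (ε * b)) ^ p * ((b/a) ^ ((1/2 - H)/p)) ^ p :=
        Real.mul_rpow (le_of_lt hLbpos) (by positivity)
      have h3 : ((b/a) ^ ((1/2 - H)/p)) ^ p = (b/a) ^ (1/2 - H) := by
        rw [← Real.rpow_mul (le_of_lt hbapos), div_mul_cancel₀ _ (by linarith : p ≠ 0)]
      have h4 : (b/a) ^ (1/2 - H) = b ^ (1/2 - H) / a ^ (1/2 - H) :=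
        Real.div_rpow (le_of_lt hb) (le_of_lt ha) _
      rw [h2, h3, h4] at h1; exact h1
    -- rewrite everything as inverses and apply mono_core
    have hga : a ^ (H - 1/2) = (a ^ (1/2 - H))⁻¹ := by
      rw [show H - 1/2 = -(1/2 - H) by ring, Real.rpow_neg (le_of_lt ha)]
    have hgb : b ^ (H - 1/2) = (b ^ (1/2 - H))⁻¹ := by
      rw [show H - 1/2 = -(1/2 - H) by ring, Real.rpow_neg (le_of_lt hb)]
    have hma : ((-Real.log (ε * a)) / (-Real.log ε)) ^ (-p)
        = ((-Real.log (ε * a)) ^ p * ((-Real.log ε) ^ p)⁻¹)⁻¹ := by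
      rw [Real.rpow_neg (le_of_lt (div_pos hLapos hL0)),
        Real.div_rpow (le_of_lt hLapos) (le_of_lt hL0), div_eq_mul_inv]
    have hmb : ((-Real.log (ε * b)) / (-Real.log ε)) ^ (-p)
        = ((-Real.log (ε * b)) ^ p * ((-Real.log ε) ^ p)⁻¹)⁻¹ := by
      rw [Real.rpow_neg (le_of_lt (div_pos hLbpos hL0)),
        Real.div_rpow (le_of_lt hLbpos) (le_of_lt hL0), div_eq_mul_inv]
    rw [hga, hgb, hma, hmb, ← mul_inv, ← mul_inv]
    exact mono_core (Real.rpow_pos_of_pos ha _) (Real.rpow_pos_of_pos hb _)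
      (Real.rpow_pos_of_pos hL0 _) (Real.rpow_pos_of_pos hLapos _)
      (Real.rpow_pos_of_pos hLbpos _) hstepB
  exact core hgapos hgab hma1 hmbpos hmb1 hmamb hgbpos step1


set_option maxHeartbeats 2000000 in
/-- Core comparison estimate for condition (K2) for log-modulated kernels: for `ε`
small enough, the squared `L²` increment of the normalized rescaled log-modulated
kernel over `[0,s]` is dominated by that of the Riemann–Liouville kernel. -/
theorem stmt_4 (H p : ℝ) (hH : H ∈ Set.Ioo 0 (1 / 2)) (hp : 1 < p) :
    ∃ ε₀ ∈ Set.Ioo (0:ℝ) 1, ∀ ε ∈ Set.Ioo (0:ℝ) ε₀, ∀ s t : ℝ,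
      0 ≤ s → s < t → t ≤ 1 →
      (∫ u in (0:ℝ)..s,
          ((t - u) ^ (H - 1 / 2) * ((-Real.log (ε * (t - u))) / (-Real.log ε)) ^ (-p)
            - (s - u) ^ (H - 1 / 2) * ((-Real.log (ε * (s - u))) / (-Real.log ε)) ^ (-p)) ^ 2)
        ≤ ∫ u in (0:ℝ)..s, ((t - u) ^ (H - 1 / 2) - (s - u) ^ (H - 1 / 2)) ^ 2 := by

  obtain ⟨hH0, hH2⟩ := hH
  have hc : (0:ℝ) < 1/2 - H := by linarith
  refine ⟨Real.exp (-(p / (1/2 - H) + 1)), ⟨Real.exp_pos _, ?_⟩, ?_⟩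
  · rw [Real.exp_lt_one_iff]
    have : 0 < p / (1/2 - H) := by positivity
    linarith
  intro ε ⟨hε0, hεlt⟩ s t hs hst ht1
  -- smallness of ε
  have hεsmall : p < (1/2 - H) * (-Real.log ε) := by
    have h1 : Real.log ε < -(p / (1/2 - H) + 1) := by
      calc Real.log ε < Real.log (Real.exp (-(p / (1/2 - H) + 1))) := Real.log_lt_log hε0 hεlt
        _ = -(p / (1/2 - H) + 1) := Real.log_exp _
    have h2 : p / (1/2 - H) + 1 < -Real.log ε := by linarith
    have h3 : p / (1/2 - H) < -Real.log ε := by linarith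
    have h4 : (1/2 - H) * (p / (1/2 - H)) = p := by
      rw [mul_comm, div_mul_cancel₀ p (ne_of_gt hc)]
    have h5 := mul_lt_mul_of_pos_left h3 hc
    linarith
  have hL0 : 0 < -Real.log ε := by nlinarith
  rcases eq_or_lt_of_le hs with hs0 | hs0
  · simp [← hs0]
  -- notation
  set ρ : ℝ := H - 1/2 with hρ_def
  have hρne : ρ ≠ 0 := by rw [hρ_def]; intro h; linarith [sub_eq_zero.mp h]
  set F : ℝ → ℝ := fun u =>
    ((t - u) ^ ρ * ((-Real.log (ε * (t - u))) / (-Real.log ε)) ^ (-p)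
      - (s - u) ^ ρ * ((-Real.log (ε * (s - u))) / (-Real.log ε)) ^ (-p)) ^ 2 with hF_def
  set G : ℝ → ℝ := fun u => ((t - u) ^ ρ - (s - u) ^ ρ) ^ 2 with hG_def
  -- pointwise inequality on [0, s]
  have hpt : ∀ u ∈ Icc (0:ℝ) s, F u ≤ G u := by
    rintro u ⟨hu0, hus⟩
    rcases eq_or_lt_of_le hus with hu | hu
    · -- u = s
      have hb : 0 < t - s := by linarith
      have hb1 : t - s ≤ 1 := by linarith
      have hz : s - u = 0 := by rw [hu]; ring
      simp only [hF_def, hG_def, hz, mul_zero, Real.log_zero, neg_zero, zero_div,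
        Real.zero_rpow hρne, Real.zero_rpow (by intro h; linarith [neg_eq_zero.mp h] : -p ≠ 0),
        mul_zero, sub_zero]
      have hgb : 0 < (t - u) ^ ρ := Real.rpow_pos_of_pos (by linarith) _
      have hm1 : ((-Real.log (ε * (t - u))) / (-Real.log ε)) ^ (-p) ≤ 1 :=
        mfac_le_one (by linarith) hε0 hL0 (by linarith) (by linarith)
      have hmpos : 0 < ((-Real.log (ε * (t - u))) / (-Real.log ε)) ^ (-p) :=
        mfac_pos hε0 hL0 (by linarith) (by linarith)
      have : (t - u) ^ ρ * ((-Real.log (ε * (t - u))) / (-Real.log ε)) ^ (-p) ≤ (t - u) ^ ρ :=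
        mul_le_of_le_one_right (le_of_lt hgb) hm1
      apply pow_le_pow_left₀ (by positivity) this
    · -- u < s
      exact key H p ε (s - u) (t - u) hH0 hH2 hp hε0 hεsmall (by linarith) (by linarith)
        (by linarith)
  -- dominating function
  have hdom : IntervalIntegrable (fun u => (s - u) ^ (2 * ρ)) volume 0 s := by
    have h1 : IntervalIntegrable (fun x : ℝ => x ^ (2 * ρ)) volume 0 s :=
      intervalIntegral.intervalIntegrable_rpow' (by rw [hρ_def]; linarith)
    have h2 := (h1.comp_sub_left s).symm
    simpa using h2
  -- a.e. facts on the interval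
  have haes : ∀ᵐ u ∂(volume.restrict (Ι (0:ℝ) s)), u ∈ Ι (0:ℝ) s ∧ u ≠ s := by
    refine (ae_restrict_mem measurableSet_uIoc).and (ae_restrict_of_ae ?_)
    rw [ae_iff]
    simp only [ne_eq, not_not, Set.setOf_eq_eq_singleton]
    exact measure_singleton s
  have hIoc : Ι (0:ℝ) s = Ioc 0 s := uIoc_of_le hs
  have hGbound : ∀ u, u ∈ Ι (0:ℝ) s ∧ u ≠ s → G u ≤ (s - u) ^ (2 * ρ) := by
    rintro u ⟨hu, hune⟩
    rw [hIoc] at hu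
    have hu0 : 0 < u := hu.1
    have hus : u < s := lt_of_le_of_ne hu.2 hune
    have ha : 0 < s - u := by linarith
    have hb : 0 < t - u := by linarith
    have hgab : (t - u) ^ ρ ≤ (s - u) ^ ρ :=
      Real.rpow_le_rpow_of_nonpos ha (by linarith) (by rw [hρ_def]; linarith)
    have hga : 0 < (s - u) ^ ρ := Real.rpow_pos_of_pos ha _
    have hgb : 0 < (t - u) ^ ρ := Real.rpow_pos_of_pos hb _
    calc G u ≤ ((s - u) ^ ρ) ^ 2 := by
          rw [hG_def]
          apply sq_le_sq' <;> linarith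
      _ = (s - u) ^ (2 * ρ) := sq_rpow (le_of_lt ha) ρ
  have hdomnn : ∀ u, u ∈ Ι (0:ℝ) s → 0 ≤ (s - u) ^ (2 * ρ) := by
    intro u hu; rw [hIoc] at hu
    exact Real.rpow_nonneg (by linarith [hu.2]) _
  -- measurability
  have hmlog1 : Measurable fun u : ℝ => -Real.log (ε * (t - u)) / (-Real.log ε) :=
    ((Real.measurable_log.comp (measurable_const.mul
      (measurable_const.sub measurable_id))).neg).div_const _
  have hmlog2 : Measurable fun u : ℝ => -Real.log (ε * (s - u)) / (-Real.log ε) :=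
    ((Real.measurable_log.comp (measurable_const.mul
      (measurable_const.sub measurable_id))).neg).div_const _
  have hmeasF : Measurable F := by rw [hF_def]; fun_prop
  have hmeasG : Measurable G := by rw [hG_def]; fun_prop
  -- integrability
  have hG : IntervalIntegrable G volume 0 s := by
    apply hdom.mono_fun' (hmeasG.aestronglyMeasurable.restrict)
    filter_upwards [haes] with u hu
    have h1 := hGbound u hu
    have h2 : 0 ≤ G u := sq_nonneg _
    simpa [Real.norm_eq_abs, abs_of_nonneg h2] using h1
  have hF : IntervalIntegrable F volume 0 s := by
    apply hdom.mono_fun' (hmeasF.aestronglyMeasurable.restrict)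
    filter_upwards [haes] with u hu
    have h1 := hGbound u hu
    have h3 : F u ≤ G u := by
      apply hpt
      rw [hIoc] at hu
      exact ⟨le_of_lt hu.1.1, hu.1.2⟩
    have h2 : 0 ≤ F u := sq_nonneg _
    simp only [Real.norm_eq_abs, abs_of_nonneg h2]
    linarith
  exact intervalIntegral.integral_mono_on hs hF hG hpt
end

section
/- Let H ∈ (0,1/2), p > 1 and C > 0. For ε ∈ (0,1) define K^ε(r,u) = C ε^H (r−u)^{H−1/2}(−log(ε(r−u)))^{−p} for 0 ≤ u < r ≤ 1 and K^ε(r,u) = 0 for u ≥ r. Then there exist constants M > 0 and ε₀ ∈ (0,1) such that for every ε ∈ (0,ε₀) and all s, t ∈ [0,1] with s ≠ t, ∫_0^1 (K^ε(t,u) − K^ε(s,u))² du ≤ M ε^{2H} (−log ε)^{−2p} |t−s|^{2H}. -/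
open Real Filter Set MeasureTheory

/-- The unscaled kernel profile. -/
noncomputable def phiK (H p ε x : ℝ) : ℝ :=
  x ^ (H - 1 / 2) * (-Real.log (ε * x)) ^ (-p)

/-- Square of the kernel profile. -/
noncomputable def gK (H p ε x : ℝ) : ℝ :=
  x ^ (2 * H - 1) * (-Real.log (ε * x)) ^ (-(2 * p))

lemma phiK_zero {H p ε : ℝ} (hH2 : H < 1 / 2) : phiK H p ε 0 = 0 := by
  unfold phiK
  rw [Real.zero_rpow (by linarith : H - 1 / 2 ≠ 0), zero_mul]

lemma gK_zero {H p ε : ℝ} (hH0 : 0 < H) (hH2 : H < 1 / 2) : gK H p ε 0 = 0 := by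
  unfold gK
  rw [Real.zero_rpow (by intro h; nlinarith : 2 * H - 1 ≠ 0), zero_mul]

lemma phiK_nonneg {H p ε x : ℝ} (hε : 0 ≤ ε) (hx : 0 ≤ x) (hεx : ε * x ≤ 1) :
    0 ≤ phiK H p ε x :=
  mul_nonneg (Real.rpow_nonneg hx _)
    (Real.rpow_nonneg (neg_nonneg.2 (Real.log_nonpos (mul_nonneg hε hx) hεx)) _)

lemma gK_nonneg {H p ε x : ℝ} (hε : 0 ≤ ε) (hx : 0 ≤ x) (hεx : ε * x ≤ 1) :
    0 ≤ gK H p ε x :=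
  mul_nonneg (Real.rpow_nonneg hx _)
    (Real.rpow_nonneg (neg_nonneg.2 (Real.log_nonpos (mul_nonneg hε hx) hεx)) _)

lemma phiK_sq {H p ε x : ℝ} (hε : 0 < ε) (hx : 0 < x) (hεx : ε * x < 1) :
    phiK H p ε x ^ 2 = gK H p ε x := by
  have hu : 0 < -Real.log (ε * x) :=
    neg_pos.2 (Real.log_neg (mul_pos hε hx) hεx)
  unfold phiK gK
  have e1 : x ^ (H - 1 / 2) * x ^ (H - 1 / 2) = x ^ (2 * H - 1) := by
    rw [← Real.rpow_add hx]; congr 1; ring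
  have e2 : (-Real.log (ε * x)) ^ (-p) * (-Real.log (ε * x)) ^ (-p)
      = (-Real.log (ε * x)) ^ (-(2 * p)) := by
    rw [← Real.rpow_add hu]; congr 1; ring
  calc (x ^ (H - 1 / 2) * (-Real.log (ε * x)) ^ (-p)) ^ 2
      = (x ^ (H - 1 / 2) * x ^ (H - 1 / 2)) *
        ((-Real.log (ε * x)) ^ (-p) * (-Real.log (ε * x)) ^ (-p)) := by ring
    _ = x ^ (2 * H - 1) * (-Real.log (ε * x)) ^ (-(2 * p)) := by rw [e1, e2]

lemma neg_log_le {ε x : ℝ} (hε : 0 < ε) (hx : 0 < x) (hx1 : x ≤ 1) :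
    -Real.log ε ≤ -Real.log (ε * x) := by
  rw [Real.log_mul hε.ne' hx.ne']
  have := Real.log_nonpos hx.le hx1
  linarith

lemma gK_le {H p ε x : ℝ} (hε : 0 < ε) (hx : 0 < x) (hx1 : x ≤ 1)
    (hl : 0 < -Real.log ε) (hp0 : 0 ≤ p) :
    gK H p ε x ≤ (-Real.log ε) ^ (-(2 * p)) * x ^ (2 * H - 1) := by
  unfold gK
  have h1 : (-Real.log (ε * x)) ^ (-(2 * p)) ≤ (-Real.log ε) ^ (-(2 * p)) :=
    Real.rpow_le_rpow_of_nonpos hl (neg_log_le hε hx hx1) (by linarith)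
  calc x ^ (2 * H - 1) * (-Real.log (ε * x)) ^ (-(2 * p))
      ≤ x ^ (2 * H - 1) * (-Real.log ε) ^ (-(2 * p)) :=
        mul_le_mul_of_nonneg_left h1 (Real.rpow_nonneg hx.le _)
    _ = (-Real.log ε) ^ (-(2 * p)) * x ^ (2 * H - 1) := mul_comm _ _

lemma gK_meas {H p ε : ℝ} : Measurable (gK H p ε) := by
  unfold gK
  exact (measurable_id.pow measurable_const).mul
    (((Real.measurable_log.comp (measurable_id.const_mul ε)).neg).pow measurable_const)

lemma phiK_meas {H p ε : ℝ} : Measurable (phiK H p ε) := by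
  unfold phiK
  exact (measurable_id.pow measurable_const).mul
    (((Real.measurable_log.comp (measurable_id.const_mul ε)).neg).pow measurable_const)

lemma gK_intervalIntegrable {H p ε : ℝ} (hH0 : 0 < H) (hH2 : H < 1 / 2)
    (hp0 : 0 ≤ p) (hε : 0 < ε) (hε1 : ε < 1) (hl : 0 < -Real.log ε) :
    IntervalIntegrable (gK H p ε) volume 0 1 := by
  apply IntervalIntegrable.mono_fun'
    (g := fun x => (-Real.log ε) ^ (-(2 * p)) * x ^ (2 * H - 1))
    ((intervalIntegral.intervalIntegrable_rpow' (by linarith)).const_mul _)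
    gK_meas.aestronglyMeasurable
  filter_upwards [self_mem_ae_restrict measurableSet_uIoc] with x hx
  rw [Set.uIoc_of_le (zero_le_one)] at hx
  have hεx : ε * x ≤ 1 := by nlinarith [hx.1, hx.2]
  rw [Real.norm_eq_abs, abs_of_nonneg (gK_nonneg hε.le hx.1.le hεx)]
  exact gK_le hε hx.1 hx.2 hl hp0

lemma gK_integral_le {H p ε δ : ℝ} (hH0 : 0 < H) (hH2 : H < 1 / 2)
    (hp0 : 0 ≤ p) (hε : 0 < ε) (hε1 : ε < 1) (hl : 0 < -Real.log ε)
    (hδ0 : 0 ≤ δ) (hδ1 : δ ≤ 1) :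
    ∫ x in (0:ℝ)..δ, gK H p ε x
      ≤ (-Real.log ε) ^ (-(2 * p)) * δ ^ (2 * H) / (2 * H) := by
  have hH1 : (-1:ℝ) < 2 * H - 1 := by linarith
  have hrint : IntervalIntegrable (fun x => (-Real.log ε) ^ (-(2 * p)) * x ^ (2 * H - 1))
      volume 0 δ := (intervalIntegral.intervalIntegrable_rpow' hH1).const_mul _
  have hgint : IntervalIntegrable (gK H p ε) volume 0 δ :=
    (gK_intervalIntegrable hH0 hH2 hp0 hε hε1 hl).mono_set
      (Set.uIcc_subset_uIcc (by rw [Set.uIcc_of_le zero_le_one]; exact ⟨le_refl 0, zero_le_one⟩)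
        (by rw [Set.uIcc_of_le zero_le_one]; exact ⟨hδ0, hδ1⟩))
  have hmono : ∫ x in (0:ℝ)..δ, gK H p ε x
      ≤ ∫ x in (0:ℝ)..δ, (-Real.log ε) ^ (-(2 * p)) * x ^ (2 * H - 1) := by
    apply intervalIntegral.integral_mono_on hδ0 hgint hrint
    intro x hx
    rcases eq_or_lt_of_le hx.1 with h | h
    · rw [← h, gK_zero hH0 hH2, Real.zero_rpow (by intro hh; nlinarith : 2 * H - 1 ≠ 0),
        mul_zero]
    · exact gK_le hε h (le_trans hx.2 hδ1) hl hp0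
  have hval : ∫ x in (0:ℝ)..δ, (-Real.log ε) ^ (-(2 * p)) * x ^ (2 * H - 1)
      = (-Real.log ε) ^ (-(2 * p)) * δ ^ (2 * H) / (2 * H) := by
    rw [intervalIntegral.integral_const_mul, integral_rpow (Or.inl hH1)]
    rw [show 2 * H - 1 + 1 = 2 * H by ring,
      Real.zero_rpow (by intro hh; nlinarith : 2 * H ≠ 0), sub_zero]
    ring
  linarith [hmono, hval.le, hval.ge]

lemma phiK_anti {H p ε : ℝ} (hH2 : H < 1 / 2) (hp0 : 0 < p)
    (hε : 0 < ε) (hε1 : ε < 1) (hA : p / (1 / 2 - H) < -Real.log ε) :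
    AntitoneOn (phiK H p ε) (Set.Ioc 0 1) := by
  have hD : ∀ x ∈ Set.Ioc (0:ℝ) 1, ∃ d, d ≤ 0 ∧ HasDerivAt (phiK H p ε) d x := by
    intro x hx
    obtain ⟨hx0, hx1⟩ := hx
    have hεx : 0 < ε * x := mul_pos hε hx0
    have hεx1 : ε * x < 1 :=
      lt_of_le_of_lt (by nlinarith : ε * x ≤ ε) hε1
    have hu : 0 < -Real.log (ε * x) := neg_pos.2 (Real.log_neg hεx hεx1)
    have huA : p / (1 / 2 - H) < -Real.log (ε * x) :=
      lt_of_lt_of_le hA (neg_log_le hε hx0 hx1)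
    have h2 : HasDerivAt (fun y => ε * y) ε x := by
      simpa using (hasDerivAt_id x).const_mul ε
    have h3 : HasDerivAt (fun y => Real.log (ε * y)) (ε / (ε * x)) x :=
      h2.log hεx.ne'
    have h4 : HasDerivAt (fun y => -Real.log (ε * y)) (-(ε / (ε * x))) x := h3.neg
    have h5 : HasDerivAt (fun y => (-Real.log (ε * y)) ^ (-p))
        (-(ε / (ε * x)) * (-p) * (-Real.log (ε * x)) ^ (-p - 1)) x :=
      h4.rpow_const (Or.inl hu.ne')
    have h1 : HasDerivAt (fun y : ℝ => y ^ (H - 1 / 2))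
        ((H - 1 / 2) * x ^ (H - 1 / 2 - 1)) x :=
      Real.hasDerivAt_rpow_const (Or.inl hx0.ne')
    have hmul := h1.mul h5
    refine ⟨_, ?_, hmul⟩
    -- nonpositivity of the derivative
    have hxne : x ≠ 0 := hx0.ne'
    have e0 : ε / (ε * x) = 1 / x := by field_simp
    have e1 : x ^ (H - 1 / 2) = x ^ (H - 1 / 2 - 1) * x := by
      rw [← Real.rpow_add_one hxne]; congr 1; ring
    have e2 : (-Real.log (ε * x)) ^ (-p)
        = (-Real.log (ε * x)) ^ (-p - 1) * (-Real.log (ε * x)) := by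
      rw [← Real.rpow_add_one hu.ne']; congr 1; ring
    have ebr : (H - 1 / 2) * (-Real.log (ε * x)) + p ≤ 0 := by
      have h := (div_lt_iff₀ (by linarith : (0:ℝ) < 1 / 2 - H)).1 huA
      nlinarith
    have eE : (H - 1 / 2) * x ^ (H - 1 / 2 - 1) * (-Real.log (ε * x)) ^ (-p)
          + x ^ (H - 1 / 2) * (-(ε / (ε * x)) * (-p) * (-Real.log (ε * x)) ^ (-p - 1))
        = x ^ (H - 1 / 2 - 1) * (-Real.log (ε * x)) ^ (-p - 1)
          * ((H - 1 / 2) * (-Real.log (ε * x)) + p) := by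
      rw [e0, e1, e2]
      field_simp
    rw [eE]
    apply mul_nonpos_iff.2
    left
    constructor
    · positivity
    · exact ebr
  apply antitoneOn_of_deriv_nonpos (convex_Ioc 0 1)
  · intro x hx
    obtain ⟨d, _, hd⟩ := hD x hx
    exact hd.continuousAt.continuousWithinAt
  · intro x hx
    rw [interior_Ioc] at hx
    obtain ⟨d, _, hd⟩ := hD x (Set.Ioo_subset_Ioc_self hx)
    exact hd.differentiableAt.differentiableWithinAt
  · intro x hx
    rw [interior_Ioc] at hx
    obtain ⟨d, hd0, hd⟩ := hD x (Set.Ioo_subset_Ioc_self hx)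
    rw [hd.deriv]
    exact hd0

set_option maxHeartbeats 1000000 in
lemma core_s5 (H p C ε : ℝ) (hH0 : 0 < H) (hH2 : H < 1 / 2) (hp : 1 < p) (hC : 0 < C)
    (hε : 0 < ε) (hlog : p / (1 / 2 - H) + 1 ≤ -Real.log ε)
    {s t : ℝ} (hs : 0 ≤ s) (hst : s < t) (ht : t ≤ 1) :
    ∫ u in (0:ℝ)..1, (Keps H p C ε t u - Keps H p C ε s u) ^ 2
      ≤ (C ^ 2 / H) * ε ^ (2 * H) * (-Real.log ε) ^ (-(2 * p)) * (t - s) ^ (2 * H) := by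
  have hp0 : (0:ℝ) < p := by linarith
  have hApos : 0 < p / (1 / 2 - H) := div_pos hp0 (by linarith)
  have hl : 0 < -Real.log ε := by linarith
  have hε1 : ε < 1 := (Real.log_neg_iff hε).1 (by linarith)
  have hA : p / (1 / 2 - H) < -Real.log ε := by linarith
  have hδ0 : 0 < t - s := sub_pos.2 hst
  have hδ1 : t - s ≤ 1 := by linarith
  have ht0 : 0 < t := lt_of_le_of_lt hs hst
  have hs1 : s ≤ 1 := by linarith
  have hanti := phiK_anti (H := H) (p := p) (ε := ε) hH2 hp0 hε hε1 hA
  -- integrability of gK on subintervals of [0,1]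
  have hgI : IntervalIntegrable (gK H p ε) volume 0 1 :=
    gK_intervalIntegrable hH0 hH2 hp0.le hε hε1 hl
  have hg_any : ∀ a b : ℝ, 0 ≤ a → a ≤ 1 → 0 ≤ b → b ≤ 1 →
      IntervalIntegrable (gK H p ε) volume a b := by
    intro a b ha ha1 hb hb1
    exact hgI.mono_set (Set.uIcc_subset_uIcc
      (by rw [Set.uIcc_of_le zero_le_one]; exact ⟨ha, ha1⟩)
      (by rw [Set.uIcc_of_le zero_le_one]; exact ⟨hb, hb1⟩))
  have hg0s := hg_any 0 s le_rfl zero_le_one hs hs1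
  have hgst := hg_any s t hs hs1 ht0.le ht
  have hg0δ := hg_any 0 (t - s) le_rfl zero_le_one hδ0.le hδ1
  have hgδt := hg_any (t - s) t hδ0.le hδ1 ht0.le ht
  -- composed integrability
  have hgs_comp : IntervalIntegrable (fun u => gK H p ε (s - u)) volume 0 s := by
    simpa using (hg0s.comp_sub_left s).symm
  have hgt_comp_0s : IntervalIntegrable (fun u => gK H p ε (t - u)) volume 0 s := by
    simpa using (hgδt.comp_sub_left t).symm
  have hgt_comp_st : IntervalIntegrable (fun u => gK H p ε (t - u)) volume s t := by
    simpa using (hg0δ.comp_sub_left t).symm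
  -- pointwise identifications
  have hεle : ∀ x : ℝ, 0 < x → x ≤ 1 → ε * x < 1 := by
    intro x hx hx1
    nlinarith
  have E_mid : ∀ u ∈ Set.Icc s t,
      (Keps H p C ε t u - Keps H p C ε s u) ^ 2
        = (C * ε ^ H) ^ 2 * gK H p ε (t - u) := by
    intro u hu
    have h1 : Keps H p C ε s u = 0 := by
      simp only [Keps]; rw [if_neg (not_lt.2 hu.1)]
    rcases lt_or_eq_of_le hu.2 with h | h
    · have hx : 0 < t - u := sub_pos.2 h
      have hu0 : 0 ≤ u := le_trans hs hu.1
      have hx1 : t - u ≤ 1 := by linarith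
      have h2 : Keps H p C ε t u
          = C * ε ^ H * (t - u) ^ (H - 1 / 2) * (-Real.log (ε * (t - u))) ^ (-p) := by
        simp only [Keps]; rw [if_pos h]
      rw [h1, h2, sub_zero, ← phiK_sq hε hx (hεle _ hx hx1)]
      unfold phiK; ring
    · have h2 : Keps H p C ε t u = 0 := by
        simp only [Keps]; rw [if_neg (by rw [h]; exact lt_irrefl t)]
      rw [h1, h2, h, sub_self t, gK_zero hH0 hH2]
      norm_num
  have E_right : ∀ u ∈ Set.Icc t 1,
      (Keps H p C ε t u - Keps H p C ε s u) ^ 2 = 0 := by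
    intro u hu
    have h1 : Keps H p C ε t u = 0 := by
      simp only [Keps]; rw [if_neg (not_lt.2 hu.1)]
    have h2 : Keps H p C ε s u = 0 := by
      simp only [Keps]; rw [if_neg (not_lt.2 (le_trans hst.le hu.1))]
    rw [h1, h2, sub_zero]
    norm_num
  have E_left : ∀ u ∈ Set.Icc 0 s,
      (Keps H p C ε t u - Keps H p C ε s u) ^ 2
        = (C * ε ^ H) ^ 2 * (phiK H p ε (s - u) - phiK H p ε (t - u)) ^ 2 := by
    intro u hu
    have hut : u < t := lt_of_le_of_lt hu.2 hst
    have h2 : Keps H p C ε t u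
        = C * ε ^ H * (t - u) ^ (H - 1 / 2) * (-Real.log (ε * (t - u))) ^ (-p) := by
      simp only [Keps]; rw [if_pos hut]
    rcases lt_or_eq_of_le hu.2 with h | h
    · have h1 : Keps H p C ε s u
          = C * ε ^ H * (s - u) ^ (H - 1 / 2) * (-Real.log (ε * (s - u))) ^ (-p) := by
        simp only [Keps]; rw [if_pos h]
      rw [h1, h2]
      unfold phiK; ring
    · have h1 : Keps H p C ε s u = 0 := by
        simp only [Keps]; rw [if_neg (by rw [h]; exact lt_irrefl s)]
      rw [h1, h2, h, sub_self, phiK_zero hH2, zero_sub, sub_zero, neg_sq]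
      unfold phiK; ring
  -- ae fact: u ≠ s
  have hne_s : ∀ᵐ u : ℝ, u ≠ s := by
    rw [MeasureTheory.ae_iff]
    simp only [ne_eq, not_not, Set.setOf_eq_eq_singleton]
    exact Real.volume_singleton
  -- integrability of F on the three pieces
  have hGL_int : IntervalIntegrable
      (fun u => (C * ε ^ H) ^ 2 * (phiK H p ε (s - u) - phiK H p ε (t - u)) ^ 2)
      volume 0 s := by
    apply IntervalIntegrable.mono_fun'
      (g := fun u => (C * ε ^ H) ^ 2 * gK H p ε (s - u)) (hgs_comp.const_mul _)
    · apply Measurable.aestronglyMeasurable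
      apply Measurable.mul measurable_const
      apply Measurable.pow _ measurable_const
      exact (phiK_meas.comp (measurable_const.sub measurable_id)).sub
        (phiK_meas.comp (measurable_const.sub measurable_id))
    · filter_upwards [self_mem_ae_restrict measurableSet_uIoc,
        MeasureTheory.ae_restrict_of_ae hne_s] with u hu hus
      rw [Set.uIoc_of_le hs] at hu
      have hus' : u < s := lt_of_le_of_ne hu.2 hus
      have hsx : 0 < s - u := sub_pos.2 hus'
      have hsx1 : s - u ≤ 1 := by linarith [hu.1]
      have htx : 0 < t - u := by linarith
      have htx1 : t - u ≤ 1 := by linarith [hu.1]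
      have hba : phiK H p ε (t - u) ≤ phiK H p ε (s - u) :=
        hanti ⟨hsx, hsx1⟩ ⟨htx, htx1⟩ (by linarith)
      have hb0 : 0 ≤ phiK H p ε (t - u) :=
        phiK_nonneg hε.le htx.le (hεle _ htx htx1).le
      rw [Real.norm_eq_abs, abs_of_nonneg (by positivity)]
      rw [← phiK_sq hε hsx (hεle _ hsx hsx1)]
      have : (phiK H p ε (s - u) - phiK H p ε (t - u)) ^ 2 ≤ phiK H p ε (s - u) ^ 2 := by
        nlinarith
      nlinarith [sq_nonneg (C * ε ^ H)]
  have hFL_int : IntervalIntegrable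
      (fun u => (Keps H p C ε t u - Keps H p C ε s u) ^ 2) volume 0 s := by
    apply hGL_int.congr
    intro u hu
    rw [Set.uIoc_of_le hs] at hu
    exact (E_left u ⟨hu.1.le, hu.2⟩).symm
  have hFM_int : IntervalIntegrable
      (fun u => (Keps H p C ε t u - Keps H p C ε s u) ^ 2) volume s t := by
    apply (hgt_comp_st.const_mul ((C * ε ^ H) ^ 2)).congr
    intro u hu
    rw [Set.uIoc_of_le hst.le] at hu
    exact (E_mid u ⟨hu.1.le, hu.2⟩).symm
  have hFR_int : IntervalIntegrable
      (fun u => (Keps H p C ε t u - Keps H p C ε s u) ^ 2) volume t 1 := by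
    apply (intervalIntegrable_const (c := (0:ℝ))).congr
    intro u hu
    rw [Set.uIoc_of_le ht] at hu
    exact (E_right u ⟨hu.1.le, hu.2⟩).symm
  -- integral values
  have IR : ∫ u in t..1, (Keps H p C ε t u - Keps H p C ε s u) ^ 2 = 0 := by
    rw [intervalIntegral.integral_congr (g := fun _ => (0:ℝ))
      (fun u hu => E_right u (by rwa [Set.uIcc_of_le ht] at hu))]
    simp
  have IM : ∫ u in s..t, (Keps H p C ε t u - Keps H p C ε s u) ^ 2
      = (C * ε ^ H) ^ 2 * ∫ x in (0:ℝ)..(t - s), gK H p ε x := by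
    rw [intervalIntegral.integral_congr
      (g := fun u => (C * ε ^ H) ^ 2 * gK H p ε (t - u))
      (fun u hu => E_mid u (by rwa [Set.uIcc_of_le hst.le] at hu))]
    rw [intervalIntegral.integral_const_mul]
    congr 1
    rw [intervalIntegral.integral_comp_sub_left (fun x => gK H p ε x) t, sub_self]
  have IL_eq : ∫ u in (0:ℝ)..s, (Keps H p C ε t u - Keps H p C ε s u) ^ 2
      = ∫ u in (0:ℝ)..s,
          (C * ε ^ H) ^ 2 * (phiK H p ε (s - u) - phiK H p ε (t - u)) ^ 2 := by
    exact intervalIntegral.integral_congr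
      (fun u hu => E_left u (by rwa [Set.uIcc_of_le hs] at hu))
  have hR_int : IntervalIntegrable
      (fun u => (C * ε ^ H) ^ 2 * (gK H p ε (s - u) - gK H p ε (t - u))) volume 0 s :=
    (hgs_comp.sub hgt_comp_0s).const_mul _
  have IL_le : ∫ u in (0:ℝ)..s,
        (C * ε ^ H) ^ 2 * (phiK H p ε (s - u) - phiK H p ε (t - u)) ^ 2
      ≤ (C * ε ^ H) ^ 2 *
        ((∫ x in (0:ℝ)..s, gK H p ε x) - ∫ x in (t - s)..t, gK H p ε x) := by
    have hmono : ∫ u in (0:ℝ)..s,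
          (C * ε ^ H) ^ 2 * (phiK H p ε (s - u) - phiK H p ε (t - u)) ^ 2
        ≤ ∫ u in (0:ℝ)..s,
          (C * ε ^ H) ^ 2 * (gK H p ε (s - u) - gK H p ε (t - u)) := by
      apply intervalIntegral.integral_mono_ae_restrict hs hGL_int hR_int
      filter_upwards [self_mem_ae_restrict measurableSet_Icc,
        MeasureTheory.ae_restrict_of_ae hne_s] with u hu hus
      have hus' : u < s := lt_of_le_of_ne hu.2 hus
      have hsx : 0 < s - u := sub_pos.2 hus'
      have hsx1 : s - u ≤ 1 := by linarith [hu.1]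
      have htx : 0 < t - u := by linarith
      have htx1 : t - u ≤ 1 := by linarith [hu.1]
      have hba : phiK H p ε (t - u) ≤ phiK H p ε (s - u) :=
        hanti ⟨hsx, hsx1⟩ ⟨htx, htx1⟩ (by linarith)
      have hb0 : 0 ≤ phiK H p ε (t - u) :=
        phiK_nonneg hε.le htx.le (hεle _ htx htx1).le
      have key : (phiK H p ε (s - u) - phiK H p ε (t - u)) ^ 2
          ≤ gK H p ε (s - u) - gK H p ε (t - u) := by
        rw [← phiK_sq hε hsx (hεle _ hsx hsx1), ← phiK_sq hε htx (hεle _ htx htx1)]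
        nlinarith
      nlinarith [sq_nonneg (C * ε ^ H)]
    have hval : ∫ u in (0:ℝ)..s,
          (C * ε ^ H) ^ 2 * (gK H p ε (s - u) - gK H p ε (t - u))
        = (C * ε ^ H) ^ 2 *
          ((∫ x in (0:ℝ)..s, gK H p ε x) - ∫ x in (t - s)..t, gK H p ε x) := by
      rw [intervalIntegral.integral_const_mul,
        intervalIntegral.integral_sub hgs_comp hgt_comp_0s]
      congr 2
      · rw [intervalIntegral.integral_comp_sub_left (fun x => gK H p ε x) s, sub_self,
          sub_zero]
      · rw [intervalIntegral.integral_comp_sub_left (fun x => gK H p ε x) t, sub_zero]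
    linarith [hmono, hval.le, hval.ge]
  -- splitting of the full integral
  have h0t := intervalIntegral.integral_add_adjacent_intervals hFL_int hFM_int
  have h01 := intervalIntegral.integral_add_adjacent_intervals (hFL_int.trans hFM_int) hFR_int
  -- additivity for gK
  have hgsum1 := intervalIntegral.integral_add_adjacent_intervals hg0s hgst
  have hgsum2 := intervalIntegral.integral_add_adjacent_intervals hg0δ hgδt
  have hstpos : 0 ≤ ∫ x in s..t, gK H p ε x := by
    apply intervalIntegral.integral_nonneg hst.le
    intro x hx
    have hx0 : 0 ≤ x := le_trans hs hx.1
    have hx1 : x ≤ 1 := le_trans hx.2 ht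
    exact gK_nonneg hε.le hx0 (by nlinarith)
  have hIδ : ∫ x in (0:ℝ)..(t - s), gK H p ε x
      ≤ (-Real.log ε) ^ (-(2 * p)) * (t - s) ^ (2 * H) / (2 * H) :=
    gK_integral_le hH0 hH2 hp0.le hε hε1 hl hδ0.le hδ1
  -- put it together
  have hc2 : (C * ε ^ H) ^ 2 = C ^ 2 * ε ^ (2 * H) := by
    rw [mul_pow, sq (ε ^ H), ← Real.rpow_add hε]
    congr 2
    ring
  have hcpos : (0:ℝ) ≤ (C * ε ^ H) ^ 2 := sq_nonneg _
  have hdiff : (∫ x in (0:ℝ)..s, gK H p ε x) - (∫ x in (t - s)..t, gK H p ε x)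
      ≤ ∫ x in (0:ℝ)..(t - s), gK H p ε x := by linarith
  have hLHS : ∫ u in (0:ℝ)..1, (Keps H p C ε t u - Keps H p C ε s u) ^ 2
      ≤ (C * ε ^ H) ^ 2 * (2 * ∫ x in (0:ℝ)..(t - s), gK H p ε x) := by
    rw [← h01, ← h0t, IR, IM]
    have h1 : ∫ u in (0:ℝ)..s, (Keps H p C ε t u - Keps H p C ε s u) ^ 2
        ≤ (C * ε ^ H) ^ 2 * ∫ x in (0:ℝ)..(t - s), gK H p ε x := by
      rw [IL_eq]
      calc ∫ u in (0:ℝ)..s,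
            (C * ε ^ H) ^ 2 * (phiK H p ε (s - u) - phiK H p ε (t - u)) ^ 2
          ≤ (C * ε ^ H) ^ 2 *
            ((∫ x in (0:ℝ)..s, gK H p ε x) - ∫ x in (t - s)..t, gK H p ε x) := IL_le
        _ ≤ (C * ε ^ H) ^ 2 * ∫ x in (0:ℝ)..(t - s), gK H p ε x :=
            mul_le_mul_of_nonneg_left hdiff hcpos
    linarith
  calc ∫ u in (0:ℝ)..1, (Keps H p C ε t u - Keps H p C ε s u) ^ 2
      ≤ (C * ε ^ H) ^ 2 * (2 * ∫ x in (0:ℝ)..(t - s), gK H p ε x) := hLHS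
    _ ≤ (C * ε ^ H) ^ 2 *
        (2 * ((-Real.log ε) ^ (-(2 * p)) * (t - s) ^ (2 * H) / (2 * H))) := by
        apply mul_le_mul_of_nonneg_left _ hcpos
        linarith
    _ = (C ^ 2 / H) * ε ^ (2 * H) * (-Real.log ε) ^ (-(2 * p)) * (t - s) ^ (2 * H) := by
        rw [hc2]
        field_simp

/-- Condition (K2) for log-modulated rough volatility: uniform Hölder-type `L²`
increment bound at the small-noise scale `γ_ε = ε^H(-log ε)^{-p}`, with exponent `H`. -/
theorem stmt_5 (H p C : ℝ) (hH : H ∈ Set.Ioo 0 (1 / 2)) (hp : 1 < p) (hC : 0 < C) :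
    ∃ M > 0, ∃ ε₀ ∈ Set.Ioo (0:ℝ) 1, ∀ ε ∈ Set.Ioo (0:ℝ) ε₀,
      ∀ s ∈ Set.Icc (0:ℝ) 1, ∀ t ∈ Set.Icc (0:ℝ) 1, s ≠ t →
      (∫ u in (0:ℝ)..1, (Keps H p C ε t u - Keps H p C ε s u) ^ 2)
        ≤ M * ε ^ (2 * H) * (-Real.log ε) ^ (-(2 * p)) * |t - s| ^ (2 * H) := by
  obtain ⟨hH0, hH2⟩ := hH
  have hApos : 0 < p / (1 / 2 - H) := div_pos (by linarith) (by linarith)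
  refine ⟨C ^ 2 / H, by positivity,
    Real.exp (-(p / (1 / 2 - H) + 1)), ⟨Real.exp_pos _, ?_⟩, ?_⟩
  · rw [Real.exp_lt_one_iff]
    linarith
  · intro ε hε s hsI t htI hne
    obtain ⟨hε0, hεlt⟩ := hε
    have hlog : p / (1 / 2 - H) + 1 ≤ -Real.log ε := by
      have := Real.log_lt_log hε0 hεlt
      rw [Real.log_exp] at this
      linarith
    rcases lt_or_gt_of_ne hne with h | h
    · have habs : |t - s| = t - s := abs_of_pos (sub_pos.2 h)
      rw [habs]
      exact core_s5 H p C ε hH0 hH2 hp hC hε0 hlog hsI.1 h htI.2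
    · have habs : |t - s| = s - t := by
        rw [abs_sub_comm]
        exact abs_of_pos (sub_pos.2 h)
      rw [habs]
      have hflip : ∫ u in (0:ℝ)..1, (Keps H p C ε t u - Keps H p C ε s u) ^ 2
          = ∫ u in (0:ℝ)..1, (Keps H p C ε s u - Keps H p C ε t u) ^ 2 :=
        intervalIntegral.integral_congr (fun u _ => by ring)
      rw [hflip]
      exact core_s5 H p C ε hH0 hH2 hp hC hε0 hlog htI.1 h hsI.2
end
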